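/- Let M be a negative definite symmetric n×n integer matrix. The rational cone Cone(E) spanned by E = { v ∈ ℤⁿ | M·v ≤ 0 componentwise } in ℚⁿ is generated by the n linearly independent vectors F_i = -M⁻¹·e_i, i = 1,…,n; in particular the cone is simplicial of dimension n. -/

import Mathlib

open Matrix

/-- The rational cone spanned by `E = { v ∈ ℤⁿ | M·v ≤ 0 }` is simplicial of dimension
`n`: it is generated by the `n` linearly independent vectors `F_i = -M⁻¹·e_i`; every
element of `E` is a nonnegative rational combination of the `F_i`, and each `F_i` is a
positive rational multiple of an element of `E`. -/
theorem stmt14 (n : ℕ) (M : Matrix (Fin n) (Fin n) ℤ) (hsymm : M.IsSymm)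
    (hnd : ∀ x : Fin n → ℚ, x ≠ 0 → x ⬝ᵥ ((M.map (Int.cast : ℤ → ℚ)) *ᵥ x) < 0)
    (F : Fin n → Fin n → ℚ)
    (hF : ∀ i, F i = -((M.map (Int.cast : ℤ → ℚ))⁻¹ *ᵥ Pi.single i 1)) :
    LinearIndependent ℚ F ∧
    (∀ v : Fin n → ℤ, (∀ i, (M *ᵥ v) i ≤ 0) →
      ∃ c : Fin n → ℚ, (∀ i, 0 ≤ c i) ∧ (fun i => (v i : ℚ)) = ∑ i, c i • F i) ∧
    (∀ i, ∃ (q : ℚ) (v : Fin n → ℤ), 0 < q ∧ (∀ j, (M *ᵥ v) j ≤ 0) ∧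
      F i = q • fun j => (v j : ℚ)) := by
  set Mq := M.map (Int.cast : ℤ → ℚ) with hMq
  have hdet : Mq.det ≠ 0 := by
    intro h
    obtain ⟨v, hv, hv0⟩ := (Matrix.exists_mulVec_eq_zero_iff).2 h
    have := hnd v hv
    rw [hv0] at this
    simp at this
  have hdetq : Mq.det = (M.det : ℚ) := by
    have h := RingHom.map_det (Int.castRingHom ℚ) M
    rw [RingHom.mapMatrix_apply] at h
    exact h.symm
  have hdet' : ((M.det : ℚ)) ≠ 0 := hdetq ▸ hdet
  have hinvM : Mq⁻¹ * Mq = 1 := Matrix.nonsing_inv_mul Mq (isUnit_iff_ne_zero.2 hdet)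
  -- F entrywise
  have hFentry : ∀ i j, F i j = -(Mq⁻¹ j i) := by
    intro i j
    rw [hF i]
    simp [Matrix.mulVec_single]
  have hcast : ∀ v : Fin n → ℤ, Mq *ᵥ (fun j => (v j : ℚ)) = fun i => ((M *ᵥ v) i : ℚ) := by
    intro v
    funext i
    have := RingHom.map_mulVec (Int.castRingHom ℚ) M v i
    simpa [Function.comp_def, hMq] using this.symm
  refine ⟨?_, ?_, ?_⟩
  · -- linear independence
    have heq : F = fun i => (-Mq⁻¹).mulVecLin (Pi.single i (1:ℚ)) := by
      funext i j
      simp [hFentry, Matrix.mulVecLin_apply, Matrix.mulVec_single]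
    rw [heq]
    have hinj : Function.Injective (-Mq⁻¹).mulVecLin := by
      rw [← LinearMap.ker_eq_bot]
      rw [LinearMap.ker_eq_bot']
      intro x hx
      by_contra hxne
      have hd : (-Mq⁻¹).det = 0 :=
        Matrix.exists_mulVec_eq_zero_iff.1 ⟨x, hxne, hx⟩
      rw [Matrix.det_neg, Matrix.det_nonsing_inv] at hd
      have : Ring.inverse Mq.det ≠ 0 := by
        rw [Ring.inverse_eq_inv']
        exact inv_ne_zero hdet
      simp [mul_eq_zero, this, pow_ne_zero] at hd
      exact hdet hd
    have hb := (Pi.basisFun ℚ (Fin n)).linearIndependent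
    have := hb.map' (-Mq⁻¹).mulVecLin (LinearMap.ker_eq_bot.2 hinj)
    convert this using 1
    funext i
    simp [Pi.basisFun_apply]
    all_goals rfl
  · -- part 2
    intro v hv
    refine ⟨fun i => -((M *ᵥ v) i : ℚ), fun i => by
      have := hv i
      simp only [Left.nonneg_neg_iff]
      exact_mod_cast this, ?_⟩
    have key : ∀ j, (∑ i, (-((M *ᵥ v) i : ℚ)) • F i) j
        = (Mq⁻¹ *ᵥ fun i => ((M *ᵥ v) i : ℚ)) j := by
      intro j
      simp only [Finset.sum_apply, Pi.smul_apply, hFentry, smul_eq_mul, mul_neg, neg_mul,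
        neg_neg, Matrix.mulVec, dotProduct]
      exact Finset.sum_congr rfl fun i _ => mul_comm _ _
    have hvinv : (fun j => (v j : ℚ)) = Mq⁻¹ *ᵥ fun i => ((M *ᵥ v) i : ℚ) := by
      rw [← hcast v, Matrix.mulVec_mulVec, hinvM, Matrix.one_mulVec]
    funext j
    have h := (congrFun hvinv j).trans (key j).symm
    simpa using h
  · -- part 3
    intro i
    set v : Fin n → ℤ := fun j => -(M.det * (M.adjugate *ᵥ Pi.single i 1) j) with hvdef
    have hFv : (fun j => (v j : ℚ)) = ((M.det : ℚ)^2) • F i := by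
      funext j
      have hadj : (Mq.adjugate) j i = ((M.adjugate j i : ℚ)) := by
        have h := RingHom.map_adjugate (Int.castRingHom ℚ) M
        rw [RingHom.mapMatrix_apply, RingHom.mapMatrix_apply] at h
        rw [hMq]
        exact (congrFun (congrFun h j) i).symm
      simp only [hvdef, Pi.smul_apply, smul_eq_mul, hFentry, Matrix.inv_def,
        Pi.smul_apply, Matrix.smul_apply, Ring.inverse_eq_inv', hadj,
        Matrix.mulVec_single_one, Matrix.col_apply, Matrix.mulVec_single, MulOpposite.op_one, one_smul, mul_one]
      rw [hdetq]
      push_cast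
      field_simp
    refine ⟨((M.det : ℚ)^2)⁻¹, v, by positivity, ?_, ?_⟩
    · intro j
      have h1 : Mq *ᵥ (fun j => (v j : ℚ)) = ((M.det : ℚ)^2) • (Mq *ᵥ F i) := by
        rw [hFv, Matrix.mulVec_smul]
      have hMF : Mq *ᵥ F i = -(Pi.single i 1) := by
        rw [hF i, Matrix.mulVec_neg, Matrix.mulVec_mulVec,
          Matrix.mul_nonsing_inv Mq (isUnit_iff_ne_zero.2 hdet), Matrix.one_mulVec]
      have h2 : ((M *ᵥ v) j : ℚ) ≤ 0 := by
        have := congrFun h1 j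
        rw [congrFun (hcast v) j] at this
        rw [this, hMF]
        simp only [Pi.smul_apply, Pi.neg_apply, smul_eq_mul, mul_neg]
        rcases eq_or_ne j i with h | h
        · subst h; simp; positivity
        · simp [Pi.single_apply, h]
      exact_mod_cast h2
    · rw [hFv]
      funext j
      simp only [Pi.smul_apply, smul_eq_mul]
      field_simp
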